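/- Von Neumann trace inequality (operator-norm form): for complex n×n matrices X and Y, |Tr(XY)| ≤ ‖X‖_op · ‖Y‖₁, where ‖·‖_op is the operator norm and ‖Y‖₁ = Tr(√(Y*Y)) is the trace norm. -/

import Mathlib

open Matrix
open scoped ComplexOrder

noncomputable def traceNorm {n : ℕ} (Y : Matrix (Fin n) (Fin n) ℂ) : ℝ :=
  (((Matrix.isHermitian_conjTranspose_mul_self Y).eigenvectorUnitary.1 *
      diagonal (((↑) : ℝ → ℂ) ∘ (√·) ∘ (Matrix.isHermitian_conjTranspose_mul_self Y).eigenvalues) *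
      (star (Matrix.isHermitian_conjTranspose_mul_self Y).eigenvectorUnitary : Matrix (Fin n) (Fin n) ℂ)).trace).re

noncomputable def opNorm {n : ℕ} (X : Matrix (Fin n) (Fin n) ℂ) : ℝ :=
  ‖Matrix.toEuclideanCLM (𝕜 := ℂ) (n := Fin n) X‖

theorem von_neumann_trace_inequality {n : ℕ} (X Y : Matrix (Fin n) (Fin n) ℂ) :
    ‖(X * Y).trace‖ ≤ opNorm X * traceNorm Y := by
  classical
  have hH : (Yᴴ * Y).IsHermitian := (Matrix.posSemidef_conjTranspose_mul_self Y).1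
  set U : Matrix (Fin n) (Fin n) ℂ := (hH.eigenvectorUnitary : Matrix (Fin n) (Fin n) ℂ) with hU
  have hUU : star U * U = 1 := Matrix.mem_unitaryGroup_iff'.mp hH.eigenvectorUnitary.2
  have hUU' : U * star U = 1 := Matrix.mem_unitaryGroup_iff.mp hH.eigenvectorUnitary.2
  set lam : Fin n → ℝ := hH.eigenvalues with hlam
  -- trace norm equals sum of square roots of eigenvalues
  have hsqrt : traceNorm Y
      = (U * Matrix.diagonal (((↑) : ℝ → ℂ) ∘ Real.sqrt ∘ lam) * star U).trace.re := rfl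
  have htr : traceNorm Y = ∑ i, Real.sqrt (lam i) := by
    rw [hsqrt, Matrix.trace_mul_cycle, hUU, one_mul,
      Matrix.trace_diagonal]
    simp
  -- columns of U
  set v : Fin n → (Fin n → ℂ) := fun i j => U j i with hv
  have entry : ∀ (M : Matrix (Fin n) (Fin n) ℂ) (i : Fin n),
      (star U * M * U) i i = dotProduct (star (v i)) (M *ᵥ v i) := by
    intro M i
    simp only [Matrix.mul_apply, Matrix.mulVec, dotProduct, Matrix.star_apply,
      Finset.sum_mul, Finset.mul_sum, hv, Pi.star_apply]
    rw [Finset.sum_comm]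
    exact Finset.sum_congr rfl fun j _ => Finset.sum_congr rfl fun k _ => by ring
  have htrace : (X * Y).trace = ∑ i, dotProduct (star (v i)) ((X * Y) *ᵥ v i) := by
    have : (X * Y).trace = (star U * (X * Y) * U).trace := by
      rw [Matrix.trace_mul_cycle, ← mul_assoc, hUU', one_mul]
    rw [this, Matrix.trace]
    exact Finset.sum_congr rfl fun i _ => entry _ i
  -- Euclidean picture
  set e : (Fin n → ℂ) → EuclideanSpace ℂ (Fin n) := fun x => (WithLp.equiv 2 _).symm x with he
  set T := Matrix.toEuclideanCLM (𝕜 := ℂ) (n := Fin n) X with hT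
  set S := Matrix.toEuclideanCLM (𝕜 := ℂ) (n := Fin n) Y with hS
  have inner_e : ∀ x y : Fin n → ℂ, inner ℂ (e x) (e y) = dotProduct (star x) y := fun x y => by
    simp only [he, WithLp.equiv_symm_apply, EuclideanSpace.inner_toLp_toLp]; exact dotProduct_comm _ _
  have hnormv : ∀ i, ‖e (v i)‖ = 1 := by
    intro i
    have h1 : (inner ℂ (e (v i)) (e (v i)) : ℂ) = 1 := by
      rw [inner_e]
      have := congrFun (congrFun hUU i) i
      simpa [Matrix.mul_apply, dotProduct, Matrix.star_apply, hv] using this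
    have h3 : ‖e (v i)‖ ^ 2 = 1 := by
      rw [← inner_self_eq_norm_sq (𝕜 := ℂ), h1]; simp
    nlinarith [norm_nonneg (e (v i))]
  have hnormS : ∀ i, ‖S (e (v i))‖ = Real.sqrt (lam i) := by
    intro i
    have hSapp : S (e (v i)) = e (Y *ᵥ v i) := Matrix.toEuclideanCLM_toLp Y (v i)
    have h1 : (inner ℂ (S (e (v i))) (S (e (v i))) : ℂ) = (lam i : ℂ) := by
      rw [hSapp, inner_e, Matrix.star_mulVec,
        ← dotProduct_mulVec, Matrix.mulVec_mulVec]
      have hdiag : star U * (Yᴴ * Y) * U = diagonal ((↑) ∘ lam) :=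
        (Unitary.conjStarAlgAut_star_apply (S := ℂ) _ _).symm.trans
          hH.conjStarAlgAut_star_eigenvectorUnitary
      have := (entry (Yᴴ * Y) i).symm.trans (congrFun (congrFun hdiag i) i)
      rw [this]
      simp
    have h3 : ‖S (e (v i))‖ ^ 2 = lam i := by
      rw [← inner_self_eq_norm_sq (𝕜 := ℂ), h1]; simp
    rw [← h3, Real.sqrt_sq (norm_nonneg _)]
  -- bound each term
  have hterm : ∀ i, ‖dotProduct (star (v i)) ((X * Y) *ᵥ v i)‖
      ≤ ‖T‖ * Real.sqrt (lam i) := by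
    intro i
    have happ : (Matrix.toEuclideanCLM (𝕜 := ℂ) (n := Fin n) (X * Y)) (e (v i))
        = T (S (e (v i))) := by
      rw [_root_.map_mul]; rfl
    have hXY : (Matrix.toEuclideanCLM (𝕜 := ℂ) (n := Fin n) (X * Y)) (e (v i))
        = e ((X * Y) *ᵥ v i) := Matrix.toEuclideanCLM_toLp _ _
    have hinner : dotProduct (star (v i)) ((X * Y) *ᵥ v i)
        = inner ℂ (e (v i)) (T (S (e (v i)))) := by
      rw [← happ, hXY, inner_e]
    rw [hinner]
    calc ‖(inner ℂ (e (v i)) (T (S (e (v i)))) : ℂ)‖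
        ≤ ‖e (v i)‖ * ‖T (S (e (v i)))‖ := norm_inner_le_norm _ _
      _ ≤ 1 * (‖T‖ * ‖S (e (v i))‖) := by
          rw [hnormv i]
          exact mul_le_mul_of_nonneg_left (T.le_opNorm _) zero_le_one
      _ = ‖T‖ * Real.sqrt (lam i) := by rw [one_mul, hnormS i]
  calc ‖(X * Y).trace‖
      ≤ ∑ i, ‖dotProduct (star (v i)) ((X * Y) *ᵥ v i)‖ := by
        rw [htrace]; exact norm_sum_le _ _
    _ ≤ ∑ i, ‖T‖ * Real.sqrt (lam i) := Finset.sum_le_sum fun i _ => hterm i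
    _ = opNorm X * traceNorm Y := by rw [← Finset.mul_sum, htr]; rfl
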